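/- Let Θ be a measurable space, let P and Q be probability measures on Θ, and let f be a trade-off function. Then the following are equivalent: (i) for every measurable function φ : Θ → [0,1] one has 1 − ∫ φ dP ≥ f(∫ φ dQ) (i.e., every randomized test with type-I error ∫ φ dQ ≤ α under Q has type-II error 1 − ∫ φ dP ≥ f(α) under P); (ii) for every measurable set E ⊆ Θ one has P(E) ≤ 1 − f(Q(E)). -/

import Mathlib

open MeasureTheory ProbabilityTheory

/-- A trade-off function: convex, continuous, non-increasing on `[0,1]`,
taking values in `[0,1]` with `f α ≤ 1 - α`. -/
def IsTradeoff (f : ℝ → ℝ) : Prop :=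
  ConvexOn ℝ (Set.Icc (0:ℝ) 1) f ∧ ContinuousOn f (Set.Icc (0:ℝ) 1) ∧
  AntitoneOn f (Set.Icc (0:ℝ) 1) ∧
  ∀ x ∈ Set.Icc (0:ℝ) 1, f x ∈ Set.Icc (0:ℝ) 1 ∧ f x ≤ 1 - x

/-- Lemma 1: the hypothesis-testing (trade-off curve) representation is
equivalent to the set-level (variational) representation. -/
theorem stmt_0 {Θ : Type*} [MeasurableSpace Θ] (P Q : Measure Θ)
    [IsProbabilityMeasure P] [IsProbabilityMeasure Q]
    (f : ℝ → ℝ) (hf : IsTradeoff f) :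
    (∀ φ : Θ → ℝ, Measurable φ → (∀ θ, φ θ ∈ Set.Icc (0:ℝ) 1) →
        f (∫ θ, φ θ ∂Q) ≤ 1 - ∫ θ, φ θ ∂P) ↔
    (∀ E : Set Θ, MeasurableSet E → (P E).toReal ≤ 1 - f ((Q E).toReal)) := by
  obtain ⟨hconv, hcont, hanti, hrange⟩ := hf
  constructor
  · intro h E hE
    have := h (E.indicator (fun _ => (1:ℝ))) (measurable_const.indicator hE)
      (fun θ => by by_cases hθ : θ ∈ E <;> simp [hθ])
    rw [integral_indicator_const (1:ℝ) hE, integral_indicator_const (1:ℝ) hE] at this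
    simp only [smul_eq_mul, mul_one, measureReal_def] at this
    linarith
  · intro h φ hφ hφ01
    -- layer cake sets
    set g : ℝ → ℝ := fun t => (Q {a | t ≤ φ a}).toReal with hg
    set k : ℝ → ℝ := fun t => (P {a | t ≤ φ a}).toReal with hk
    have hmeasSet : ∀ t, MeasurableSet {a | t ≤ φ a} := fun t =>
      measurableSet_le measurable_const hφ
    have hg_anti : Antitone g := fun s t hst =>
      ENNReal.toReal_mono (measure_ne_top _ _)
        (measure_mono (fun a (ha : t ≤ φ a) => hst.trans ha))
    have hk_anti : Antitone k := fun s t hst =>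
      ENNReal.toReal_mono (measure_ne_top _ _)
        (measure_mono (fun a (ha : t ≤ φ a) => hst.trans ha))
    have hg01 : ∀ t, g t ∈ Set.Icc (0:ℝ) 1 := fun t =>
      ⟨ENNReal.toReal_nonneg, by
        simpa using ENNReal.toReal_mono (by simp) (prob_le_one (μ := Q) (s := {a | t ≤ φ a}))⟩
    have hk01 : ∀ t, k t ∈ Set.Icc (0:ℝ) 1 := fun t =>
      ⟨ENNReal.toReal_nonneg, by
        simpa using ENNReal.toReal_mono (by simp) (prob_le_one (μ := P) (s := {a | t ≤ φ a}))⟩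
    -- integrability of φ
    have hφint : ∀ (μ : Measure Θ) [IsProbabilityMeasure μ], Integrable φ μ := by
      intro μ _
      refine ⟨hφ.aestronglyMeasurable, ?_⟩
      apply HasFiniteIntegral.of_bounded (C := 1)
      exact Filter.Eventually.of_forall fun θ => by
        rw [Real.norm_eq_abs, abs_le]; constructor <;> linarith [(hφ01 θ).1, (hφ01 θ).2]
    have hφnn : ∀ (μ : Measure Θ), (0:Θ → ℝ) ≤ᵐ[μ] φ :=
      fun μ => Filter.Eventually.of_forall fun θ => (hφ01 θ).1
    have hφbd : ∀ (μ : Measure Θ), φ ≤ᵐ[μ] fun _ => (1:ℝ) :=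
      fun μ => Filter.Eventually.of_forall fun θ => (hφ01 θ).2
    -- layer cake representations
    have hQ : ∫ θ, φ θ ∂Q = ∫ t in Set.Ioc (0:ℝ) 1, g t :=
      (hφint Q).integral_eq_integral_Ioc_meas_le (hφnn Q) (hφbd Q)
    have hP : ∫ θ, φ θ ∂P = ∫ t in Set.Ioc (0:ℝ) 1, k t :=
      (hφint P).integral_eq_integral_Ioc_meas_le (hφnn P) (hφbd P)
    -- the restricted Lebesgue measure is a probability measure
    haveI : IsProbabilityMeasure (volume.restrict (Set.Ioc (0:ℝ) 1)) :=
      ⟨by simp⟩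
    set μ₀ := volume.restrict (Set.Ioc (0:ℝ) 1) with hμ₀
    -- integrability of the tail functions
    have int_of : ∀ (u : ℝ → ℝ), Measurable u → (∀ t, u t ∈ Set.Icc (0:ℝ) 1) →
        Integrable u μ₀ := by
      intro u hu hu01
      refine ⟨hu.aestronglyMeasurable, ?_⟩
      apply HasFiniteIntegral.of_bounded (C := 1)
      exact Filter.Eventually.of_forall fun t => by
        rw [Real.norm_eq_abs, abs_le]; constructor <;> linarith [(hu01 t).1, (hu01 t).2]
    have hg_meas : Measurable g := hg_anti.measurable
    have hk_meas : Measurable k := hk_anti.measurable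
    have hg_int : Integrable g μ₀ := int_of g hg_meas hg01
    have hk_int : Integrable k μ₀ := int_of k hk_meas hk01
    have hfg_mono : Monotone (f ∘ g) := fun s t hst =>
      hanti (hg01 t) (hg01 s) (hg_anti hst)
    have hfg_int : Integrable (f ∘ g) μ₀ :=
      int_of (f ∘ g) hfg_mono.measurable (fun t => (hrange _ (hg01 t)).1)
    -- Jensen
    have jensen : f (∫ t, g t ∂μ₀) ≤ ∫ t, f (g t) ∂μ₀ :=
      hconv.map_integral_le hcont isClosed_Icc
        (Filter.Eventually.of_forall hg01) hg_int hfg_int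
    -- pointwise comparison
    have hpt : ∀ t, f (g t) ≤ 1 - k t := fun t => by
      have := h _ (hmeasSet t); simp only [hg, hk]; linarith
    have step : ∫ t, f (g t) ∂μ₀ ≤ ∫ t, (1 - k t) ∂μ₀ := by
      apply integral_mono hfg_int ((integrable_const 1).sub hk_int) hpt
    have hconst : ∫ t, (1 - k t) ∂μ₀ = 1 - ∫ t, k t ∂μ₀ := by
      rw [integral_sub (integrable_const 1) hk_int]
      simp
    have : f (∫ t, g t ∂μ₀) ≤ 1 - ∫ t, k t ∂μ₀ := by
      calc f (∫ t, g t ∂μ₀) ≤ ∫ t, f (g t) ∂μ₀ := jensen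
        _ ≤ ∫ t, (1 - k t) ∂μ₀ := step
        _ = 1 - ∫ t, k t ∂μ₀ := hconst
    rw [hQ, hP]
    exact this
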